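/- arXiv:2410.19520 — 9 statements merged into one kernel-verified Lean document; each statement's English description precedes it below -/
import Mathlib

section
/- Let Γ and Δ be small categories, F : Γ ⥤ Cat a functor, and σ : Δ ⥤ Γ a functor. Then there is a bijection between (i) functors τ : Δ ⥤ Grothendieck F such that τ ⋙ Grothendieck.forget F = σ, and (ii) covariant sections of the functor σ ⋙ F : Δ ⥤ Cat. (This is the local representability / context-extension isomorphism of the category model of type theory.) -/
open CategoryTheory

/-- A covariant section of a functor `F : Γ ⥤ Cat`: objects `a γ : F.obj γ` together with
morphisms `m f : (F.map f).obj (a γ₀) ⟶ a γ₁`, functorial in `f`. -/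
structure CovSection {Γ : Type} [Category Γ] (F : Γ ⥤ Cat) where
  a : ∀ γ : Γ, F.obj γ
  m : ∀ (γ₀ γ₁ : Γ) (f : γ₀ ⟶ γ₁), (F.map f).toFunctor.obj (a γ₀) ⟶ a γ₁
  m_id : ∀ γ : Γ, m γ γ (𝟙 γ) = eqToHom (by simp)
  m_comp : ∀ (γ₀ γ₁ γ₂ : Γ) (f : γ₀ ⟶ γ₁) (g : γ₁ ⟶ γ₂),
    m γ₀ γ₂ (f ≫ g) = eqToHom (by simp) ≫ (F.map g).toFunctor.map (m γ₀ γ₁ f) ≫ m γ₁ γ₂ g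

/-- The functor `Δ ⥤ Grothendieck F` associated to a covariant section of `σ ⋙ F`. -/
def CovSection.toFunctor {Γ Δ : Type} [SmallCategory Γ] [SmallCategory Δ]
    (F : Γ ⥤ Cat) (σ : Δ ⥤ Γ) (s : CovSection (σ ⋙ F)) : Δ ⥤ Grothendieck F where
  obj δ := ⟨σ.obj δ, s.a δ⟩
  map {δ₀ δ₁} f := ⟨σ.map f, s.m δ₀ δ₁ f⟩
  map_id δ := by
    apply Grothendieck.ext <;> simp [s.m_id, Grothendieck.id]
    erw [eqToHom_trans]
  map_comp {δ₀ δ₁ δ₂} f g := by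
    apply Grothendieck.ext <;> simp [s.m_comp, Grothendieck.comp]
    erw [eqToHom_trans_assoc]

/-- Local representability / context extension in the category model: functors `τ : Δ ⥤ ∫F`
lying over `σ : Δ ⥤ Γ` are in bijection with covariant sections of `σ ⋙ F`. -/
theorem grothendieck_sections_local_representability
    (Γ Δ : Type) [SmallCategory Γ] [SmallCategory Δ]
    (F : Γ ⥤ Cat) (σ : Δ ⥤ Γ) :
    Nonempty ({τ : Δ ⥤ Grothendieck F // τ ⋙ Grothendieck.forget F = σ} ≃
      CovSection (σ ⋙ F)) := by
  refine ⟨(Equiv.ofBijective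
    (fun s : CovSection (σ ⋙ F) => (⟨s.toFunctor F σ, rfl⟩ :
      {τ : Δ ⥤ Grothendieck F // τ ⋙ Grothendieck.forget F = σ})) ⟨?_, ?_⟩).symm⟩
  · intro s t h
    have h' : s.toFunctor F σ = t.toFunctor F σ := congrArg Subtype.val h
    obtain ⟨sa, sm, _, _⟩ := s
    obtain ⟨ta, tm, _, _⟩ := t
    have ha : sa = ta := by
      funext δ
      have := Functor.congr_obj h' δ
      simp only [CovSection.toFunctor, Grothendieck.mk.injEq, heq_eq_eq, true_and] at this
      exact this
    subst ha
    have hm : @sm = @tm := by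
      funext δ₀ δ₁ f
      have := Functor.congr_hom h' f
      simp only [CovSection.toFunctor, eqToHom_refl, Category.comp_id, Category.id_comp] at this
      erw [eqToHom_refl, eqToHom_refl, Category.comp_id, Category.id_comp] at this
      have := Grothendieck.Hom.mk.inj this
      exact eq_of_heq this.2
    subst hm
    rfl
  · rintro ⟨τ, rfl⟩
    refine ⟨⟨fun δ => (τ.obj δ).fiber, fun δ₀ δ₁ f => (τ.map f).fiber, ?_, ?_⟩, ?_⟩
    · intro δ
      show (τ.map (𝟙 δ)).fiber = _
      rw [Grothendieck.congr (τ.map_id δ)]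
      simp [Grothendieck.id_fiber]
      erw [eqToHom_trans]
      rfl
    · intro δ₀ δ₁ δ₂ f g
      show (τ.map (f ≫ g)).fiber = _
      rw [Grothendieck.congr (τ.map_comp f g)]
      simp [Grothendieck.comp_fiber]
      erw [eqToHom_trans_assoc]
      rfl
    · rfl
end

section
/- Let Γ and Δ be small categories, F : Γ ⥤ Cat a functor, and σ : Δ ⥤ Γ a functor. The commuting square in the category Cat whose sides are Grothendieck.pre F σ : Grothendieck (σ ⋙ F) ⥤ Grothendieck F, the projection Grothendieck.forget (σ ⋙ F) : Grothendieck (σ ⋙ F) ⥤ Δ, the projection Grothendieck.forget F : Grothendieck F ⥤ Γ, and σ : Δ ⥤ Γ, is a pullback square in Cat. (This is the stability of context extension under substitution in the category model.) -/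
open CategoryTheory

set_option maxHeartbeats 1000000
namespace GPre

variable {Γ Δ : Type} [SmallCategory Γ] [SmallCategory Δ]
  (F : Γ ⥤ Cat.{0,0}) (σ : Δ ⥤ Γ)

variable {X : Type} [SmallCategory X] (a : X ⥤ Grothendieck F) (b : X ⥤ Δ)
  (h : a ⋙ Grothendieck.forget F = b ⋙ σ)

def e (x : X) : (a.obj x).base = σ.obj (b.obj x) := Functor.congr_obj h x

lemma hmap {x y : X} (f : x ⟶ y) :
    (a.map f).base = eqToHom (e F σ a b h x) ≫ σ.map (b.map f) ≫ eqToHom (e F σ a b h y).symm :=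
  Functor.congr_hom h f

lemma obj_eq {x y : X} (f : x ⟶ y) :
    ((σ ⋙ F).map (b.map f)).toFunctor.obj ((F.map (eqToHom (e F σ a b h x))).toFunctor.obj (a.obj x).fiber)
      = (F.map (eqToHom (e F σ a b h y))).toFunctor.obj ((F.map (a.map f).base).toFunctor.obj (a.obj x).fiber) := by
  have : eqToHom (e F σ a b h x) ≫ σ.map (b.map f) = (a.map f).base ≫ eqToHom (e F σ a b h y) := by
    rw [hmap F σ a b h f]; simp
  have h2 := congrArg (fun k => (F.map k).toFunctor.obj (a.obj x).fiber) this
  rw [F.map_comp, F.map_comp] at h2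
  exact h2

@[simps] def lift : X ⥤ Grothendieck (σ ⋙ F) where
  obj x := ⟨b.obj x, (F.map (eqToHom (e F σ a b h x))).toFunctor.obj (a.obj x).fiber⟩
  map {x y} f := ⟨b.map f,
    eqToHom (obj_eq F σ a b h f) ≫ (F.map (eqToHom (e F σ a b h y))).toFunctor.map (a.map f).fiber⟩
  map_id x := by
    refine Grothendieck.ext _ _ (by rw [Grothendieck.id_base]; exact b.map_id x) ?_
    show eqToHom _ ≫ eqToHom _ ≫ (F.map (eqToHom (e F σ a b h x))).toFunctor.map (a.map (𝟙 x)).fiber = _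
    rw [Grothendieck.congr (a.map_id x)]
    simp only [Functor.map_comp, eqToHom_map, Grothendieck.id_fiber, eqToHom_trans_assoc, eqToHom_trans]
  map_comp {x y z} f g := by
    refine Grothendieck.ext _ _ (by rw [Grothendieck.comp_base]; exact b.map_comp f g) ?_
    show eqToHom _ ≫ eqToHom _ ≫ (F.map (eqToHom (e F σ a b h z))).toFunctor.map (a.map (f ≫ g)).fiber = _
    rw [Grothendieck.congr (a.map_comp f g)]
    have key : F.map (eqToHom (e F σ a b h y)) ≫ F.map (σ.map (b.map g))
        = F.map (a.map g).base ≫ F.map (eqToHom (e F σ a b h z)) := by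
      rw [← F.map_comp, ← F.map_comp]
      congr 1
      rw [hmap F σ a b h g]; simp
    have key2 := Functor.congr_hom (congrArg Cat.Hom.toFunctor key) ((a.map f).fiber)
    simp only [Cat.Hom.comp_map] at key2
    simp only [Grothendieck.comp_fiber]
    simp only [Functor.comp_map, Functor.map_comp, Category.assoc]
    rw [key2]
    simp only [Functor.map_comp, eqToHom_map, Category.assoc, eqToHom_trans_assoc, eqToHom_trans]
    rw [eqToHom_refl, Category.id_comp]

end GPre

namespace GPre
open Grothendieck

variable {Γ Δ : Type} [SmallCategory Γ] [SmallCategory Δ]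
  (F : Γ ⥤ Cat.{0,0}) (σ : Δ ⥤ Γ)

lemma obj_ext {p q : Grothendieck F} (hb : p.base = q.base)
    (hf : (F.map (eqToHom hb)).toFunctor.obj p.fiber = q.fiber) : p = q := by
  cases p; cases q
  dsimp at hb
  subst hb
  simp only [eqToHom_refl, CategoryTheory.Functor.map_id, Cat.Hom.id_obj] at hf
  cases hf
  rfl

variable {X : Type} [SmallCategory X] (a : X ⥤ Grothendieck F) (b : X ⥤ Δ)
  (h : a ⋙ Grothendieck.forget F = b ⋙ σ)

lemma lift_forget : lift F σ a b h ⋙ Grothendieck.forget (σ ⋙ F) = b := rfl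

lemma lift_pre : lift F σ a b h ⋙ Grothendieck.pre F σ = a := by
  have hobj : ∀ x, (lift F σ a b h ⋙ Grothendieck.pre F σ).obj x = a.obj x := by
    intro x
    exact (obj_ext F (e F σ a b h x) rfl).symm
  refine CategoryTheory.Functor.ext hobj ?_
  intro x y f
  rw [Grothendieck.eqToHom_eq, Grothendieck.eqToHom_eq]
  refine Grothendieck.ext _ _ ?_ ?_
  · show σ.map (b.map f) = _
    simp [hmap F σ a b h f]
    erw [eqToHom_refl, eqToHom_refl, Category.id_comp, Category.comp_id]
  · simp [eqToHom_map, hmap F σ a b h f]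
    apply eq_of_heq
    refine (eqToHom_comp_heq_iff _ _ _).mpr ?_
    refine (eqToHom_comp_heq_iff _ _ _).mpr ?_
    refine (heq_eqToHom_comp_iff _ _ _).mpr ?_
    refine (heq_eqToHom_comp_iff _ _ _).mpr ?_
    refine (heq_eqToHom_comp_iff _ _ _).mpr ?_
    refine (heq_comp_eqToHom_iff _ _ _).mpr ?_
    exact HEq.rfl

end GPre

namespace GPre
variable {Γ Δ : Type} [SmallCategory Γ] [SmallCategory Δ]
  (F : Γ ⥤ Cat.{0,0}) (σ : Δ ⥤ Γ)
variable {X : Type} [SmallCategory X]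

lemma self_eq_lift (m : X ⥤ Grothendieck (σ ⋙ F)) :
    m = lift F σ (m ⋙ Grothendieck.pre F σ) (m ⋙ Grothendieck.forget (σ ⋙ F)) rfl := by
  have hobj : ∀ x, m.obj x =
      (lift F σ (m ⋙ Grothendieck.pre F σ) (m ⋙ Grothendieck.forget (σ ⋙ F)) rfl).obj x := by
    intro x
    refine obj_ext (σ ⋙ F) rfl ?_
    simp
    erw [eqToHom_map]; rfl
  refine CategoryTheory.Functor.ext hobj ?_
  intro x y f
  rw [Grothendieck.eqToHom_eq, Grothendieck.eqToHom_eq]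
  refine Grothendieck.ext _ _ ?_ ?_
  · simp
    erw [eqToHom_refl, eqToHom_refl, Category.id_comp, Category.comp_id]; rfl
  · simp only [Grothendieck.comp_fiber]
    have h2 := Functor.congr_hom (congrArg Cat.Hom.toFunctor (F.map_id (σ.obj ((m.obj y).base)))) ((m.map f).fiber)
    have h1 := Functor.congr_hom
      (show (F.map (σ.map (𝟙 ((m.obj y).base)))).toFunctor = 𝟭 _ by simp)
      ((m.map f).fiber)
    simp [eqToHom_map, h1, h2]
    apply eq_of_heq
    refine (eqToHom_comp_heq_iff _ _ _).mpr ?_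
    refine (heq_eqToHom_comp_iff _ _ _).mpr ?_
    refine (heq_eqToHom_comp_iff _ _ _).mpr ?_
    refine (heq_eqToHom_comp_iff _ _ _).mpr ?_
    refine (heq_comp_eqToHom_iff _ _ _).mpr ?_
    erw [eqToHom_refl, σ.map_id, F.map_id]
    erw [lift_map_fiber]
    refine (heq_eqToHom_comp_iff _ _ _).mpr ?_
    erw [eqToHom_refl, F.map_id]
    exact HEq.rfl

lemma lift_uniq (a : X ⥤ Grothendieck F) (b : X ⥤ Δ)
    (h : a ⋙ Grothendieck.forget F = b ⋙ σ) (m : X ⥤ Grothendieck (σ ⋙ F))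
    (h1 : m ⋙ Grothendieck.pre F σ = a) (h2 : m ⋙ Grothendieck.forget (σ ⋙ F) = b) :
    m = lift F σ a b h := by
  subst h1; subst h2
  exact self_eq_lift F σ m

end GPre

/-- Stability of context extension under substitution in the category model: the square
whose sides are `Grothendieck.pre F σ`, `Grothendieck.forget (σ ⋙ F)`,
`Grothendieck.forget F`, and `σ` is a pullback square in `Cat`. -/
theorem grothendieck_pre_isPullback
    (Γ Δ : Type) [SmallCategory Γ] [SmallCategory Δ]
    (F : Γ ⥤ Cat.{0, 0}) (σ : Δ ⥤ Γ) :
    IsPullback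
      (show Cat.of (Grothendieck (σ ⋙ F)) ⟶ Cat.of (Grothendieck F) from (Grothendieck.pre F σ).toCatHom)
      (show Cat.of (Grothendieck (σ ⋙ F)) ⟶ Cat.of Δ from (Grothendieck.forget (σ ⋙ F)).toCatHom)
      (show Cat.of (Grothendieck F) ⟶ Cat.of Γ from (Grothendieck.forget F).toCatHom)
      (show Cat.of Δ ⟶ Cat.of Γ from σ.toCatHom) := by
  exact IsPullback.of_isLimit' ⟨rfl⟩ (Limits.PullbackCone.IsLimit.mk _
    (fun s => (GPre.lift F σ s.fst.toFunctor s.snd.toFunctor (congrArg Cat.Hom.toFunctor s.condition)).toCatHom)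
    (fun s => Cat.ext (GPre.lift_pre F σ s.fst.toFunctor s.snd.toFunctor (congrArg Cat.Hom.toFunctor s.condition)))
    (fun s => Cat.ext (GPre.lift_forget F σ s.fst.toFunctor s.snd.toFunctor (congrArg Cat.Hom.toFunctor s.condition)))
    (fun s m h1 h2 => Cat.ext (GPre.lift_uniq F σ s.fst.toFunctor s.snd.toFunctor (congrArg Cat.Hom.toFunctor s.condition) m.toFunctor (congrArg Cat.Hom.toFunctor h1) (congrArg Cat.Hom.toFunctor h2))))
end

section
/- Let Γ be a small category, F : Γ ⥤ Cat a functor, t = (a, m) a contravariant section of F, and t' = (a', m') a covariant section of F. Define H on objects by H γ = Hom_{F.obj γ}(a γ, a' γ), and for a morphism f : γ₀ ⟶ γ₁ define H f : H γ₀ → H γ₁ by h ↦ m f ≫ (F.map f).map h ≫ m' f. Then H preserves identities (H (𝟙 γ) = id) and composition (H (f ≫ g) = H g ∘ H f), i.e., H defines a functor Γ ⥤ Type. (This is the well-definedness of the hom-type former in the category model of directed type theory.) -/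
open CategoryTheory

/-- Covariant section laws of `F : Γ ⥤ Cat`. -/
def IsCovSection {Γ : Type} [Category Γ] (F : Γ ⥤ Cat)
    (a : ∀ γ : Γ, F.obj γ)
    (m : ∀ (γ₀ γ₁ : Γ) (f : γ₀ ⟶ γ₁), (F.map f).toFunctor.obj (a γ₀) ⟶ a γ₁) : Prop :=
  (∀ γ : Γ, m γ γ (𝟙 γ) = eqToHom (by simp)) ∧
  (∀ (γ₀ γ₁ γ₂ : Γ) (f : γ₀ ⟶ γ₁) (g : γ₁ ⟶ γ₂),
    m γ₀ γ₂ (f ≫ g) = eqToHom (by simp) ≫ (F.map g).toFunctor.map (m γ₀ γ₁ f) ≫ m γ₁ γ₂ g)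

/-- Contravariant section laws of `F : Γ ⥤ Cat`. -/
def IsContraSection {Γ : Type} [Category Γ] (F : Γ ⥤ Cat)
    (a : ∀ γ : Γ, F.obj γ)
    (m : ∀ (γ₀ γ₁ : Γ) (f : γ₀ ⟶ γ₁), a γ₁ ⟶ (F.map f).toFunctor.obj (a γ₀)) : Prop :=
  (∀ γ : Γ, m γ γ (𝟙 γ) = eqToHom (by simp)) ∧
  (∀ (γ₀ γ₁ γ₂ : Γ) (f : γ₀ ⟶ γ₁) (g : γ₁ ⟶ γ₂),
    m γ₀ γ₂ (f ≫ g) = m γ₁ γ₂ g ≫ (F.map g).toFunctor.map (m γ₀ γ₁ f) ≫ eqToHom (by simp))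

/-- The hom-type former in the category model is well defined: given a contravariant section
`t = (a, m)` and a covariant section `t' = (a', m')` of `F`, the assignment
`H γ = (a γ ⟶ a' γ)`, `H f h = m f ≫ (F.map f).toFunctor.map h ≫ m' f` preserves identities and
composition, i.e. defines a functor `Γ ⥤ Type`. -/
theorem hom_former_is_functor {Γ : Type} [SmallCategory Γ] (F : Γ ⥤ Cat)
    (a : ∀ γ : Γ, F.obj γ)
    (m : ∀ (γ₀ γ₁ : Γ) (f : γ₀ ⟶ γ₁), a γ₁ ⟶ (F.map f).toFunctor.obj (a γ₀))
    (a' : ∀ γ : Γ, F.obj γ)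
    (m' : ∀ (γ₀ γ₁ : Γ) (f : γ₀ ⟶ γ₁), (F.map f).toFunctor.obj (a' γ₀) ⟶ a' γ₁)
    (ht : IsContraSection F a m) (ht' : IsCovSection F a' m') :
    (∀ (γ : Γ) (h : a γ ⟶ a' γ),
      m γ γ (𝟙 γ) ≫ (F.map (𝟙 γ)).toFunctor.map h ≫ m' γ γ (𝟙 γ) = h) ∧
    (∀ (γ₀ γ₁ γ₂ : Γ) (f : γ₀ ⟶ γ₁) (g : γ₁ ⟶ γ₂) (h : a γ₀ ⟶ a' γ₀),
      m γ₀ γ₂ (f ≫ g) ≫ (F.map (f ≫ g)).toFunctor.map h ≫ m' γ₀ γ₂ (f ≫ g) =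
        m γ₁ γ₂ g ≫ (F.map g).toFunctor.map (m γ₀ γ₁ f ≫ (F.map f).toFunctor.map h ≫ m' γ₀ γ₁ f) ≫
          m' γ₁ γ₂ g) := by
  obtain ⟨hti, htc⟩ := ht
  obtain ⟨hti', htc'⟩ := ht'
  constructor
  · intro γ h
    rw [hti, hti']
    have : (F.map (𝟙 γ)).toFunctor.map h =
        eqToHom (by simp) ≫ h ≫ eqToHom (by simp) := by
      have := Functor.congr_hom (congrArg Cat.Hom.toFunctor (F.map_id γ)) h
      simpa using this
    rw [this]
    simp
  · intro γ₀ γ₁ γ₂ f g h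
    rw [htc, htc']
    have : (F.map (f ≫ g)).toFunctor.map h =
        eqToHom (by simp) ≫ (F.map g).toFunctor.map ((F.map f).toFunctor.map h) ≫ eqToHom (by simp) := by
      have := Functor.congr_hom (congrArg Cat.Hom.toFunctor (F.map_comp f g)) h
      simpa using this
    rw [this]
    simp
end

section
/- Let Γ be a groupoid and F : Γ ⥤ Cat a functor, and let t = (a, m) be a contravariant section of F. For each morphism f : γ₀ ⟶ γ₁ of Γ, define m⁻ f : (F.map f).obj (a γ₀) ⟶ a γ₁ as the composite of (F.map f).map (m (Groupoid.inv f)) with the canonical morphism (eqToHom) identifying (F.map f).obj ((F.map (Groupoid.inv f)).obj (a γ₁)) with a γ₁ (via F.map_comp and F.map_id). Then (a, m⁻) is a covariant section of F. (This is the well-definedness of the neutral-context coercion −t in the category model.) -/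
open CategoryTheory

/-- The hom-term condition from a contravariant section `(a, m)` to a covariant
section `(a', m')` of `F`. -/
def IsHomTerm {Γ : Type} [Category Γ] (F : Γ ⥤ Cat)
    (a : ∀ γ : Γ, F.obj γ)
    (m : ∀ (γ₀ γ₁ : Γ) (f : γ₀ ⟶ γ₁), a γ₁ ⟶ (F.map f).toFunctor.obj (a γ₀))
    (a' : ∀ γ : Γ, F.obj γ)
    (m' : ∀ (γ₀ γ₁ : Γ) (f : γ₀ ⟶ γ₁), (F.map f).toFunctor.obj (a' γ₀) ⟶ a' γ₁)
    (e : ∀ γ : Γ, a γ ⟶ a' γ) : Prop :=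
  ∀ (γ₀ γ₁ : Γ) (f : γ₀ ⟶ γ₁), e γ₁ = m γ₀ γ₁ f ≫ (F.map f).toFunctor.map (e γ₀) ≫ m' γ₀ γ₁ f

/-- Neutral-context coercion `m ↦ m⁻` on morphism parts (contravariant to covariant), for a
groupoid context `Γ`: `m⁻ f = (F.map f).toFunctor.map (m (Groupoid.inv f)) ≫ eqToHom _`. -/
def negMap {Γ : Type} [Groupoid Γ] (F : Γ ⥤ Cat)
    (a : ∀ γ : Γ, F.obj γ)
    (m : ∀ (γ₀ γ₁ : Γ) (f : γ₀ ⟶ γ₁), a γ₁ ⟶ (F.map f).toFunctor.obj (a γ₀))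
    (γ₀ γ₁ : Γ) (f : γ₀ ⟶ γ₁) : (F.map f).toFunctor.obj (a γ₀) ⟶ a γ₁ :=
  (F.map f).toFunctor.map (m γ₁ γ₀ (Groupoid.inv f)) ≫
    eqToHom (by rw [← Cat.Hom.comp_obj, ← F.map_comp, Groupoid.inv_comp, F.map_id, Cat.Hom.id_obj])

/-- Neutral-context coercion `n ↦ n⁻` on morphism parts (covariant to contravariant), for a
groupoid context `Γ`: `n⁻ f = eqToHom _ ≫ (F.map f).toFunctor.map (n (Groupoid.inv f))`. -/
def negMap' {Γ : Type} [Groupoid Γ] (F : Γ ⥤ Cat)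
    (a : ∀ γ : Γ, F.obj γ)
    (n : ∀ (γ₀ γ₁ : Γ) (f : γ₀ ⟶ γ₁), (F.map f).toFunctor.obj (a γ₀) ⟶ a γ₁)
    (γ₀ γ₁ : Γ) (f : γ₀ ⟶ γ₁) : a γ₁ ⟶ (F.map f).toFunctor.obj (a γ₀) :=
  eqToHom (by rw [← Cat.Hom.comp_obj, ← F.map_comp, Groupoid.inv_comp, F.map_id, Cat.Hom.id_obj]) ≫
    (F.map f).toFunctor.map (n γ₁ γ₀ (Groupoid.inv f))

/-- Neutral-context coercion is well defined in the category model: for a groupoid `Γ` and a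
contravariant section `t = (a, m)` of `F : Γ ⥤ Cat`, the data `(a, m⁻)` is a covariant
section of `F`. -/
theorem negMap_isCovSection {Γ : Type} [Groupoid Γ] (F : Γ ⥤ Cat)
    (a : ∀ γ : Γ, F.obj γ)
    (m : ∀ (γ₀ γ₁ : Γ) (f : γ₀ ⟶ γ₁), a γ₁ ⟶ (F.map f).toFunctor.obj (a γ₀))
    (ht : IsContraSection F a m) :
    IsCovSection F a (negMap F a m) := by
  have key : ∀ (γ₀ γ₁ : Γ) (f g : γ₀ ⟶ γ₁) (h : f = g),
      m γ₀ γ₁ f = m γ₀ γ₁ g ≫ eqToHom (by rw [h]) := by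
    rintro _ _ f _ rfl; simp
  constructor
  · intro γ
    rw [negMap, key γ γ _ (𝟙 γ) (by simp [Groupoid.inv_eq_inv]), ht.1]
    simp [eqToHom_map]
  · intro γ₀ γ₁ γ₂ f g
    have hinv : Groupoid.inv (f ≫ g) = Groupoid.inv g ≫ Groupoid.inv f := by
      simp [Groupoid.inv_eq_inv]
    rw [negMap, key γ₂ γ₀ _ _ hinv, ht.2]
    simp only [negMap, Functor.map_comp, eqToHom_map, Category.assoc]
    have h1 : F.map (f ≫ g) = F.map f ≫ F.map g := F.map_comp f g
    have h3 : F.map (Groupoid.inv f) ≫ F.map (f ≫ g) = F.map g := by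
      rw [← F.map_comp, ← Category.assoc, Groupoid.inv_comp, Category.id_comp]
    rw [show (F.map (f ≫ g)).toFunctor.map ((F.map (Groupoid.inv f)).toFunctor.map (m γ₂ γ₁ (Groupoid.inv g)))
        = (F.map (Groupoid.inv f) ≫ F.map (f ≫ g)).toFunctor.map (m γ₂ γ₁ (Groupoid.inv g)) from rfl,
      Functor.congr_hom (congrArg Cat.Hom.toFunctor h3), Functor.congr_hom (congrArg Cat.Hom.toFunctor h1)]
    simp [eqToHom_map]
end

section
/- Let Γ be a groupoid and F : Γ ⥤ Cat a functor. The neutral-context coercion sending a contravariant section (a, m) of F to the covariant section (a, m⁻), where m⁻ f = (F.map f).map (m (Groupoid.inv f)) followed by the canonical eqToHom, and the neutral-context coercion sending a covariant section (a', n) of F to the contravariant section (a', n⁻), where n⁻ f is the canonical eqToHom followed by (F.map f).map (n (Groupoid.inv f)), are mutually inverse: applying one coercion and then the other returns the original section (the object parts are unchanged and the morphism parts agree). -/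
open CategoryTheory

lemma gpd_inv_inv {Γ : Type} [Groupoid Γ] {γ₀ γ₁ : Γ} (f : γ₀ ⟶ γ₁) :
    Groupoid.inv (Groupoid.inv f) = f := by
  simp [Groupoid.inv_eq_inv]

lemma m_congr {Γ : Type} [Category Γ] (F : Γ ⥤ Cat)
    (a : ∀ γ : Γ, F.obj γ) {γ₀ γ₁ : Γ}
    (m : ∀ (γ₀ γ₁ : Γ) (f : γ₀ ⟶ γ₁), a γ₁ ⟶ (F.map f).toFunctor.obj (a γ₀))
    {g g' : γ₀ ⟶ γ₁} (h : g = g') :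
    m γ₀ γ₁ g = m γ₀ γ₁ g' ≫ eqToHom (by rw [h]) := by subst h; simp

lemma n_congr {Γ : Type} [Category Γ] (F : Γ ⥤ Cat)
    (a : ∀ γ : Γ, F.obj γ) {γ₀ γ₁ : Γ}
    (n : ∀ (γ₀ γ₁ : Γ) (f : γ₀ ⟶ γ₁), (F.map f).toFunctor.obj (a γ₀) ⟶ a γ₁)
    {g g' : γ₀ ⟶ γ₁} (h : g = g') :
    n γ₀ γ₁ g = eqToHom (by rw [h]) ≫ n γ₀ γ₁ g' := by subst h; simp

lemma conj_aux {Γ : Type} [Groupoid Γ] (F : Γ ⥤ Cat) {γ₀ γ₁ : Γ} (f : γ₀ ⟶ γ₁)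
    {X Y : F.obj γ₁} (x : X ⟶ Y) :
    (F.map f).toFunctor.map ((F.map (Groupoid.inv f)).toFunctor.map x) =
      eqToHom (by rw [← Cat.Hom.comp_obj, ← F.map_comp, Groupoid.inv_comp, F.map_id, Cat.Hom.id_obj]) ≫ x ≫
      eqToHom (by rw [← Cat.Hom.comp_obj, ← F.map_comp, Groupoid.inv_comp, F.map_id, Cat.Hom.id_obj]) := by
  have h := Functor.congr_hom
    (show (F.map (Groupoid.inv f) ≫ F.map f).toFunctor = (𝟙 (F.obj γ₁) : F.obj γ₁ ⟶ F.obj γ₁).toFunctor by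
      rw [← F.map_comp, Groupoid.inv_comp, F.map_id]) x
  simpa using h

lemma conj_aux' {Γ : Type} [Groupoid Γ] (F : Γ ⥤ Cat) {γ₀ γ₁ : Γ} (f : γ₀ ⟶ γ₁)
    {X Y : F.obj γ₀} (x : X ⟶ Y) :
    (F.map (Groupoid.inv f)).toFunctor.map ((F.map f).toFunctor.map x) =
      eqToHom (by rw [← Cat.Hom.comp_obj, ← F.map_comp, Groupoid.comp_inv, F.map_id, Cat.Hom.id_obj]) ≫ x ≫
      eqToHom (by rw [← Cat.Hom.comp_obj, ← F.map_comp, Groupoid.comp_inv, F.map_id, Cat.Hom.id_obj]) := by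
  have h := Functor.congr_hom
    (show (F.map f ≫ F.map (Groupoid.inv f)).toFunctor = (𝟙 (F.obj γ₀) : F.obj γ₀ ⟶ F.obj γ₀).toFunctor by
      rw [← F.map_comp, Groupoid.comp_inv, F.map_id]) x
  simpa using h

/-- The two neutral-context coercions are mutually inverse: for a groupoid `Γ`, coercing a
contravariant section `(a, m)` to the covariant section `(a, m⁻)` and back returns `(a, m)`
(the object part is unchanged by construction and the morphism parts agree), and likewise
starting from a covariant section `(a', n)`. -/
theorem negMap_negMap'_inverse {Γ : Type} [Groupoid Γ] (F : Γ ⥤ Cat) :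
    (∀ (a : ∀ γ : Γ, F.obj γ)
      (m : ∀ (γ₀ γ₁ : Γ) (f : γ₀ ⟶ γ₁), a γ₁ ⟶ (F.map f).toFunctor.obj (a γ₀)),
      IsContraSection F a m →
        ∀ (γ₀ γ₁ : Γ) (f : γ₀ ⟶ γ₁), negMap' F a (negMap F a m) γ₀ γ₁ f = m γ₀ γ₁ f) ∧
    (∀ (a' : ∀ γ : Γ, F.obj γ)
      (n : ∀ (γ₀ γ₁ : Γ) (f : γ₀ ⟶ γ₁), (F.map f).toFunctor.obj (a' γ₀) ⟶ a' γ₁),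
      IsCovSection F a' n →
        ∀ (γ₀ γ₁ : Γ) (f : γ₀ ⟶ γ₁), negMap F a' (negMap' F a' n) γ₀ γ₁ f = n γ₀ γ₁ f) := by
  constructor
  · intro a m _ γ₀ γ₁ f
    simp only [negMap, negMap', m_congr F a m (gpd_inv_inv f), Functor.map_comp, eqToHom_map,
      Category.assoc]
    rw [conj_aux F f]
    simp
  · intro a' n _ γ₀ γ₁ f
    simp only [negMap, negMap', n_congr F a' n (gpd_inv_inv f), Functor.map_comp, eqToHom_map,
      Category.assoc]
    rw [conj_aux F f]
    simp
end

section
/- Let Γ be a groupoid, F : Γ ⥤ Cat a functor, and t = (a, m) a contravariant section of F with neutral-context coercion −t = (a, m⁻). Then the family of identity morphisms (𝟙 (a γ))_{γ} is a hom-term from t to −t; equivalently, for every morphism f : γ₀ ⟶ γ₁ of Γ, m f ≫ (F.map f).map (𝟙 (a γ₀)) ≫ m⁻ f = 𝟙 (a γ₁). (This is the well-typedness of the reflexivity term refl_t : hom(t, −t) in the category model.) -/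
open CategoryTheory

/-- Well-typedness of the reflexivity term `refl_t : hom(t, −t)` in the category model: for a
groupoid `Γ` and a contravariant section `t = (a, m)` of `F` with coercion `−t = (a, m⁻)`,
the family of identities `(𝟙 (a γ))_γ` is a hom-term from `t` to `−t`; equivalently,
`m f ≫ (F.map f).toFunctor.map (𝟙 (a γ₀)) ≫ m⁻ f = 𝟙 (a γ₁)` for every `f : γ₀ ⟶ γ₁`. -/
theorem refl_isHomTerm {Γ : Type} [Groupoid Γ] (F : Γ ⥤ Cat)
    (a : ∀ γ : Γ, F.obj γ)
    (m : ∀ (γ₀ γ₁ : Γ) (f : γ₀ ⟶ γ₁), a γ₁ ⟶ (F.map f).toFunctor.obj (a γ₀))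
    (ht : IsContraSection F a m) :
    IsHomTerm F a m a (negMap F a m) (fun γ => 𝟙 (a γ)) := by
  obtain ⟨hid, hcomp⟩ := ht
  intro γ₀ γ₁ f
  have key := hcomp γ₁ γ₀ γ₁ (Groupoid.inv f) f
  have hm : ∀ (k : γ₁ ⟶ γ₁), k = 𝟙 γ₁ → ∀ (h : a γ₁ = (F.map k).toFunctor.obj (a γ₁)),
      m γ₁ γ₁ k = eqToHom h := by
    rintro k rfl h
    exact hid γ₁
  rw [hm _ (Groupoid.inv_comp f) (by simp [Groupoid.inv_comp f])] at key
  dsimp only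
  rw [negMap, CategoryTheory.Functor.map_id, Category.id_comp]
  have := congrArg
    (· ≫ eqToHom (show (F.map (Groupoid.inv f ≫ f)).toFunctor.obj (a γ₁) = a γ₁ by
      simp [Groupoid.inv_comp f])) key
  simp only [Category.assoc, eqToHom_trans, eqToHom_refl, Category.comp_id] at this
  exact this
end

section
/- Let Γ be a groupoid and F : Γ ⥤ Cat a functor. Let t and u be contravariant sections of F, let v be a covariant section of F, and let −u denote the neutral-context coercion of u to a covariant section. If p is a hom-term from t to −u and q is a hom-term from u to v, then the pointwise composite family (p γ ≫ q γ)_{γ} is a hom-term from t to v. (This is the well-typedness of composition of homs in the category model.) -/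
open CategoryTheory

/-- Well-typedness of composition of homs in the category model: for a groupoid `Γ`,
contravariant sections `t`, `u` and a covariant section `v` of `F`, if `p` is a hom-term from
`t` to `−u` and `q` is a hom-term from `u` to `v`, then the pointwise composite
`(p γ ≫ q γ)_γ` is a hom-term from `t` to `v`. -/
theorem homTerm_comp {Γ : Type} [Groupoid Γ] (F : Γ ⥤ Cat)
    (ta : ∀ γ : Γ, F.obj γ)
    (tm : ∀ (γ₀ γ₁ : Γ) (f : γ₀ ⟶ γ₁), ta γ₁ ⟶ (F.map f).toFunctor.obj (ta γ₀))
    (ht : IsContraSection F ta tm)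
    (ua : ∀ γ : Γ, F.obj γ)
    (um : ∀ (γ₀ γ₁ : Γ) (f : γ₀ ⟶ γ₁), ua γ₁ ⟶ (F.map f).toFunctor.obj (ua γ₀))
    (hu : IsContraSection F ua um)
    (va : ∀ γ : Γ, F.obj γ)
    (vm : ∀ (γ₀ γ₁ : Γ) (f : γ₀ ⟶ γ₁), (F.map f).toFunctor.obj (va γ₀) ⟶ va γ₁)
    (hv : IsCovSection F va vm)
    (p : ∀ γ : Γ, ta γ ⟶ ua γ) (hp : IsHomTerm F ta tm ua (negMap F ua um) p)
    (q : ∀ γ : Γ, ua γ ⟶ va γ) (hq : IsHomTerm F ua um va vm q) :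
    IsHomTerm F ta tm va vm (fun γ => p γ ≫ q γ) := by
  intro γ₀ γ₁ f
  have key : negMap F ua um γ₀ γ₁ f ≫ um γ₀ γ₁ f = 𝟙 _ := by
    have keyid : ∀ (g : γ₀ ⟶ γ₀) (hg : g = 𝟙 γ₀), um γ₀ γ₀ g =
        eqToHom (by rw [hg]; simp) := by
      rintro g rfl; exact hu.1 γ₀
    have h1 := (keyid _ (Groupoid.comp_inv f)).symm.trans (hu.2 γ₀ γ₁ γ₀ f (Groupoid.inv f))
    have h2 := congrArg (fun x => (F.map f).toFunctor.map x ≫ eqToHom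
      (show (F.map f).toFunctor.obj ((F.map (f ≫ Groupoid.inv f)).toFunctor.obj (ua γ₀)) = (F.map f).toFunctor.obj (ua γ₀) by
        rw [Groupoid.comp_inv, F.map_id]; rfl)) h1
    simp only [Functor.map_comp, eqToHom_map, Category.assoc] at h2
    have h3 : F.map (Groupoid.inv f) ≫ F.map f = 𝟙 (F.obj γ₁) := by
      rw [← F.map_comp, Groupoid.inv_comp, F.map_id]
    have h4 := Functor.congr_hom (congrArg Cat.Hom.toFunctor h3) (um γ₀ γ₁ f)
    simp only [Cat.Hom.comp_map, Cat.Hom.id_map] at h4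
    rw [h4] at h2
    simp only [negMap, Category.assoc, eqToHom_trans, eqToHom_refl, Category.comp_id] at h2 ⊢
    exact h2.symm
  have key' := reassoc_of% key
  simp only [hp γ₀ γ₁ f, hq γ₀ γ₁ f, Functor.map_comp, Category.assoc, key']
end

section
/- Let Γ be a small category and F : Γ ⥤ Cat a functor such that F.obj γ is a groupoid for every object γ of Γ. Let t = (a, m) be a contravariant section of F, t' = (a', m') a covariant section of F, and e a hom-term from t to t'. Then the family of inverses (Groupoid.inv (e γ))_{γ} is a hom-term from the fiberwise coercion of t' (the contravariant section (a', (Groupoid.inv (m' f))_f)) to the fiberwise coercion of t (the covariant section (a, (Groupoid.inv (m f))_f)); explicitly, for every f : γ₀ ⟶ γ₁, Groupoid.inv (e γ₁) = Groupoid.inv (m' f) ≫ (F.map f).map (Groupoid.inv (e γ₀)) ≫ Groupoid.inv (m f). (This is the semantic content of the Proposition that in any directed CwF, the hom-types of a neutral type are symmetric identity types.) -/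
open CategoryTheory

/-- Hom-terms of a neutral (fiberwise groupoid) type are symmetric: if every fiber `F.obj γ`
is a groupoid, `t = (a, m)` is a contravariant section, `t' = (a', m')` a covariant section,
and `e` is a hom-term from `t` to `t'`, then the family of inverses `(inv (e γ))_γ` is a
hom-term from the fiberwise coercion of `t'` to the fiberwise coercion of `t`; explicitly,
`inv (e γ₁) = inv (m' f) ≫ (F.map f).toFunctor.map (inv (e γ₀)) ≫ inv (m f)` for all `f : γ₀ ⟶ γ₁`. -/
theorem neutral_homTerm_symm {Γ : Type} [SmallCategory Γ] (F : Γ ⥤ Cat)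
    (hG : ∀ (γ : Γ) (x y : F.obj γ) (h : x ⟶ y), IsIso h)
    (a : ∀ γ : Γ, F.obj γ)
    (m : ∀ (γ₀ γ₁ : Γ) (f : γ₀ ⟶ γ₁), a γ₁ ⟶ (F.map f).toFunctor.obj (a γ₀))
    (ht : IsContraSection F a m)
    (a' : ∀ γ : Γ, F.obj γ)
    (m' : ∀ (γ₀ γ₁ : Γ) (f : γ₀ ⟶ γ₁), (F.map f).toFunctor.obj (a' γ₀) ⟶ a' γ₁)
    (ht' : IsCovSection F a' m')
    (e : ∀ γ : Γ, a γ ⟶ a' γ) (he : IsHomTerm F a m a' m' e) :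
    IsHomTerm F
      a' (fun γ₀ γ₁ f => letI := hG γ₁ _ _ (m' γ₀ γ₁ f); inv (m' γ₀ γ₁ f))
      a (fun γ₀ γ₁ f => letI := hG γ₁ _ _ (m γ₀ γ₁ f); inv (m γ₀ γ₁ f))
      (fun γ => letI := hG γ _ _ (e γ); inv (e γ)) := by
  intro γ₀ γ₁ f
  haveI := hG γ₁ _ _ (m' γ₀ γ₁ f)
  haveI := hG γ₁ _ _ (m γ₀ γ₁ f)
  haveI := hG γ₀ _ _ (e γ₀)
  haveI := hG γ₁ _ _ (e γ₁)
  simp only []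
  rw [he γ₀ γ₁ f]
  simp
end

section
/- Let A be a category, a an object of A, M : Under a ⥤ Cat a functor, and m an object of M.obj (Under.mk (𝟙 a)). For every object b of A and every morphism p : a ⟶ b, the morphism ι p : Under.mk (𝟙 a) ⟶ Under.mk p in Under a induced by p (using 𝟙 a ≫ p = p) yields an object J p := (M.map (ι p)).obj m of M.obj (Under.mk p); and this assignment satisfies the β-law J (𝟙 a) = m. (This is the soundness of directed path induction, the directed J-rule, in the category model over the empty context.) -/
open CategoryTheory

/-- Directed path induction in the category model over the empty context: given a category
`A`, an object `a`, a functor `M : Under a ⥤ Cat` and an object `m` of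
`M.obj (Under.mk (𝟙 a))`, every morphism `p : a ⟶ b` yields an object
`J p = (M.map (ι p)).obj m` of `M.obj (Under.mk p)`, where `ι p : Under.mk (𝟙 a) ⟶ Under.mk p`
is induced by `p`. -/
def dirJ {A : Type} [SmallCategory A] {a : A} (M : Under a ⥤ Cat)
    (m : M.obj (Under.mk (𝟙 a))) {b : A} (p : a ⟶ b) : M.obj (Under.mk p) :=
  (M.map (Under.homMk p (by simp) : Under.mk (𝟙 a) ⟶ Under.mk p)).toFunctor.obj m

/-- Soundness of the directed J-rule in the category model over the empty context: the
β-law `J (𝟙 a) = m` holds. -/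
theorem dirJ_beta {A : Type} [SmallCategory A] (a : A) (M : Under a ⥤ Cat)
    (m : M.obj (Under.mk (𝟙 a))) :
    dirJ M m (𝟙 a) = m := by
  have h : (Under.homMk (𝟙 a) (by simp) : Under.mk (𝟙 a) ⟶ Under.mk (𝟙 a)) = 𝟙 _ := by
    ext; rfl
  simp [dirJ, h]
end
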